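/- Let (f_{ij}) be a g×g matrix over R[[t]] (R an integral domain containing ℚ) whose constant-term matrix (f_{ij}(0)) is invertible over R. Suppose φ_1,…,φ_g ∈ t·R[[t]] satisfy ∑_j f_{ij}(φ_j)·φ_j' = δ_{i1} for all i. Then for each fixed order m ≥ 1, the coefficients of t^m in φ_1,…,φ_g are uniquely determined by the coefficients of lower order, via solving the linear system with matrix (f_{ij}(0)): formally, if ψ_1,…,ψ_g ∈ t·R[[t]] also satisfy the same system, then φ_j = ψ_j for all j. -/

import Mathlib

open PowerSeries Finset in
/-- Composition `f(g)` of formal power series, valid when `g` has zero constant term. -/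
noncomputable def psComp {R : Type*} [CommRing R] (f g : PowerSeries R) : PowerSeries R :=
  PowerSeries.mk fun n => ∑ m ∈ Finset.range (n + 1),
    PowerSeries.coeff (R := R) m f * PowerSeries.coeff (R := R) n (g ^ m)

open PowerSeries Finset in
theorem psComp_coeff {R : Type*} [CommRing R] (f g : PowerSeries R) (n : ℕ) :
    coeff (R := R) n (psComp f g) = ∑ m ∈ range (n + 1), coeff (R := R) m f * coeff (R := R) n (g ^ m) :=
  coeff_mk _ _

open PowerSeries Finset in
theorem psComp_coeff_congr {R : Type*} [CommRing R] (f φ ψ : PowerSeries R) (N : ℕ)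
    (h : (X : PowerSeries R) ^ N ∣ (φ - ψ)) {a : ℕ} (ha : a < N) :
    coeff (R := R) a (psComp f φ) = coeff (R := R) a (psComp f ψ) := by
  rw [psComp_coeff, psComp_coeff]
  refine Finset.sum_congr rfl fun l _ => ?_
  congr 1
  have : coeff (R := R) a (φ ^ l - ψ ^ l) = 0 := by
    cases l with
    | zero => simp
    | succ l =>
      have hd : (X : PowerSeries R) ^ N ∣ φ ^ (l + 1) - ψ ^ (l + 1) :=
        h.trans (sub_dvd_pow_sub_pow φ ψ (l + 1))
      exact (X_pow_dvd_iff.mp hd) a ha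
  rw [map_sub, sub_eq_zero] at this
  exact this

open PowerSeries Finset in
theorem key_coeff {R : Type*} [CommRing R] (f φ ψ : PowerSeries R) (k : ℕ)
    (h : (X : PowerSeries R) ^ (k + 1) ∣ (φ - ψ)) :
    coeff (R := R) k (psComp f φ * φ.derivativeFun - psComp f ψ * ψ.derivativeFun)
      = constantCoeff (R := R) f *
        (((k : R) + 1) * (coeff (R := R) (k + 1) φ - coeff (R := R) (k + 1) ψ)) := by
  have hcoeff : ∀ a < k + 1, coeff (R := R) a (φ - ψ) = 0 := X_pow_dvd_iff.mp h
  have hsplit : psComp f φ * φ.derivativeFun - psComp f ψ * ψ.derivativeFun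
      = psComp f φ * (φ.derivativeFun - ψ.derivativeFun)
        + (psComp f φ - psComp f ψ) * ψ.derivativeFun := by ring
  rw [hsplit, map_add]
  have h2 : coeff (R := R) k ((psComp f φ - psComp f ψ) * ψ.derivativeFun) = 0 := by
    rw [coeff_mul]
    refine Finset.sum_eq_zero fun p hp => ?_
    have hp1 : p.1 < k + 1 := by
      have := Finset.HasAntidiagonal.mem_antidiagonal.mp hp
      omega
    rw [map_sub, psComp_coeff_congr f φ ψ (k + 1) h hp1, sub_self, zero_mul]
  rw [h2, add_zero, coeff_mul]
  rw [Finset.sum_eq_single (0, k)]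
  · have hc0 : coeff (R := R) 0 (psComp f φ) = constantCoeff (R := R) f := by
      simp [psComp_coeff]
    rw [hc0, map_sub, (by intro f n; exact coeff_derivative f n : ∀ (f : PowerSeries R) (n : ℕ), coeff n f.derivativeFun = coeff (n + 1) f * (n + 1)), (by intro f n; exact coeff_derivative f n : ∀ (f : PowerSeries R) (n : ℕ), coeff n f.derivativeFun = coeff (n + 1) f * (n + 1))]
    push_cast
    ring
  · intro p hp hpne
    have hps := Finset.HasAntidiagonal.mem_antidiagonal.mp hp
    have hp2 : p.2 < k := by
      rcases Nat.lt_or_ge p.2 k with h' | h'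
      · exact h'
      · exfalso; apply hpne
        have : p.2 = k := le_antisymm (by omega) h'
        have : p.1 = 0 := by omega
        ext <;> simp_all
    have : coeff (R := R) p.2 (φ.derivativeFun - ψ.derivativeFun) = 0 := by
      rw [map_sub, (by intro f n; exact coeff_derivative f n : ∀ (f : PowerSeries R) (n : ℕ), coeff n f.derivativeFun = coeff (n + 1) f * (n + 1)), (by intro f n; exact coeff_derivative f n : ∀ (f : PowerSeries R) (n : ℕ), coeff n f.derivativeFun = coeff (n + 1) f * (n + 1)), ← sub_mul]
      have := hcoeff (p.2 + 1) (by omega)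
      rw [map_sub] at this
      rw [sub_eq_zero] at this
      rw [this, sub_self, zero_mul]
    rw [this, mul_zero]
  · intro hmem
    exfalso; apply hmem
    simp [Finset.mem_antidiagonal]

open PowerSeries Finset in
/-- Uniqueness part of Lemma `curves`: if the constant-term matrix of `f` is invertible over `R`,
then any two solutions `φ, ψ ∈ (t·R[[t]])^g` of the system `∑_j f_{ij}(φ_j) · φ_j' = δ_{i1}`
coincide. -/
theorem stmt_1 {R : Type*} [CommRing R] [IsDomain R] [Algebra ℚ R] (g : ℕ)
    (f : Matrix (Fin g) (Fin g) (PowerSeries R))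
    (hf0 : IsUnit (f.map (PowerSeries.constantCoeff (R := R))))
    (φ ψ : Fin g → PowerSeries R)
    (hφ0 : ∀ j, PowerSeries.constantCoeff (R := R) (φ j) = 0)
    (hψ0 : ∀ j, PowerSeries.constantCoeff (R := R) (ψ j) = 0)
    (hφ : ∀ i, ∑ j, psComp (f i j) (φ j) * (φ j).derivativeFun
        = if (i : ℕ) = 0 then 1 else 0)
    (hψ : ∀ i, ∑ j, psComp (f i j) (ψ j) * (ψ j).derivativeFun
        = if (i : ℕ) = 0 then 1 else 0) :
    φ = ψ := by
  haveI : CharZero R := charZero_of_injective_algebraMap (algebraMap ℚ R).injective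
  obtain ⟨u, hu⟩ := hf0
  suffices key : ∀ m j, coeff (R := R) m (φ j) = coeff (R := R) m (ψ j) by
    funext j
    ext m
    exact key m j
  intro m
  induction m using Nat.strong_induction_on with
  | _ m ih =>
    match m with
    | 0 =>
      intro j
      simp only [coeff_zero_eq_constantCoeff, hφ0 j, hψ0 j]
    | (k + 1) =>
      -- the differences are divisible by X^(k+1)
      have hdvd : ∀ j, (X : PowerSeries R) ^ (k + 1) ∣ (φ j - ψ j) := by
        intro j
        rw [X_pow_dvd_iff]
        intro a ha
        rw [map_sub, ih a ha j, sub_self]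
      -- take coefficient k of the difference of the two systems
      have hEq : ∀ i : Fin g, ∑ j, constantCoeff (R := R) (f i j) *
          (((k : R) + 1) * (coeff (R := R) (k + 1) (φ j) - coeff (R := R) (k + 1) (ψ j))) = 0 := by
        intro i
        have h0 : (∑ j, psComp (f i j) (φ j) * (φ j).derivativeFun)
            - (∑ j, psComp (f i j) (ψ j) * (ψ j).derivativeFun) = 0 := by
          rw [hφ i, hψ i, sub_self]
        rw [← Finset.sum_sub_distrib] at h0
        have := congrArg (coeff (R := R) k) h0
        rw [map_sum, map_zero] at this
        calc ∑ j, constantCoeff (R := R) (f i j) *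
              (((k : R) + 1) * (coeff (R := R) (k + 1) (φ j) - coeff (R := R) (k + 1) (ψ j)))
            = ∑ j, coeff (R := R) k (psComp (f i j) (φ j) * (φ j).derivativeFun
                - psComp (f i j) (ψ j) * (ψ j).derivativeFun) := by
              refine Finset.sum_congr rfl fun j _ => ?_
              rw [key_coeff (f i j) (φ j) (ψ j) k (hdvd j)]
          _ = 0 := this
      -- this says mulVec of the constant matrix on the vector w is zero
      set w : Fin g → R := fun j =>
        ((k : R) + 1) * (coeff (R := R) (k + 1) (φ j) - coeff (R := R) (k + 1) (ψ j)) with hw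
      have hmv : (f.map (constantCoeff (R := R))).mulVec w = 0 := by
        funext i
        simpa [Matrix.mulVec, dotProduct, Matrix.map_apply] using hEq i
      have hwzero : w = 0 := by
        have := congrArg (fun v => (↑u⁻¹ : Matrix (Fin g) (Fin g) R).mulVec v) hmv
        simpa [Matrix.mulVec_mulVec, ← hu, Matrix.mulVec_zero, Matrix.one_mulVec] using this
      intro j
      have hwj : ((k : R) + 1) * (coeff (R := R) (k + 1) (φ j) - coeff (R := R) (k + 1) (ψ j)) = 0 := by
        have := congrFun hwzero j
        simpa [hw] using this
      have hne : ((k : R) + 1) ≠ 0 := Nat.cast_add_one_ne_zero k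
      have := mul_eq_zero.mp hwj
      rcases this with h' | h'
      · exact absurd h' hne
      · exact sub_eq_zero.mp h'
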